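/- Let G and H be groups, φ : G → H a surjective group homomorphism, and S ⊆ G a finite subset satisfying conditions (H2), (H4) and (H6). Then for all f₁, f₂ ∈ H there exist g₁, g₂ ∈ G with φ(g₁) = f₁ and φ(g₂) = f₂ such that P'⁻(f₂) ∩ N'⁺(f₁) = φ(P⁻(g₂) ∩ N⁺(g₁)) and φ is injective on P⁻(g₂) ∩ N⁺(g₁); in particular the finite sets P'⁻(f₂) ∩ N'⁺(f₁) and P⁻(g₂) ∩ N⁺(g₁) have the same cardinality. -/

import Mathlib

/-- Forward neighbourhood `N⁺(g) = {g*s : s ∈ S}`. -/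
def Nplus {G : Type*} [Group G] [DecidableEq G] (S : Finset G) (g : G) : Finset G :=
  S.image fun s => g * s

/-- Local retrospective present `P⁻(g) = {g*a⁻¹*b : a, b ∈ S}`. -/
def Pminus {G : Type*} [Group G] [DecidableEq G] (S : Finset G) (g : G) : Finset G :=
  (S ×ˢ S).image fun p => g * p.1⁻¹ * p.2

/-- Forward neighbourhood in the quotient: `N'⁺(f) = {f*φ(s) : s ∈ S}`. -/
def Nplus' {G H : Type*} [Group G] [Group H] [DecidableEq H] (φ : G →* H) (S : Finset G)
    (f : H) : Finset H :=
  S.image fun s => f * φ s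

/-- `P'⁻(f) = {f*φ(a)⁻¹*φ(b) : a, b ∈ S}` in the quotient. -/
def Pminus' {G H : Type*} [Group G] [Group H] [DecidableEq H] (φ : G →* H) (S : Finset G)
    (f : H) : Finset H :=
  (S ×ˢ S).image fun p => f * (φ p.1)⁻¹ * φ p.2

/-- Condition (H2): for all `a, b ∈ S`, `φ(a*b⁻¹) = 1 ↔ a*b⁻¹ = 1`. -/
def CondH2 {G H : Type*} [Group G] [Group H] (φ : G →* H) (S : Finset G) : Prop :=
  ∀ a ∈ S, ∀ b ∈ S, (φ (a * b⁻¹) = 1 ↔ a * b⁻¹ = 1)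

/-- Condition (H4): for all `a, b, c, d ∈ S`, `φ(a*b⁻¹*c*d⁻¹) = 1 ↔ a*b⁻¹*c*d⁻¹ = 1`. -/
def CondH4 {G H : Type*} [Group G] [Group H] (φ : G →* H) (S : Finset G) : Prop :=
  ∀ a ∈ S, ∀ b ∈ S, ∀ c ∈ S, ∀ d ∈ S,
    (φ (a * b⁻¹ * c * d⁻¹) = 1 ↔ a * b⁻¹ * c * d⁻¹ = 1)

/-- Condition (H6): for all `a, b, c, d, e, f ∈ S`,
`φ(a*b⁻¹*c*d⁻¹*e*f⁻¹) = 1 ↔ a*b⁻¹*c*d⁻¹*e*f⁻¹ = 1`. -/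
def CondH6 {G H : Type*} [Group G] [Group H] (φ : G →* H) (S : Finset G) : Prop :=
  ∀ a ∈ S, ∀ b ∈ S, ∀ c ∈ S, ∀ d ∈ S, ∀ e ∈ S, ∀ f ∈ S,
    (φ (a * b⁻¹ * c * d⁻¹ * e * f⁻¹) = 1 ↔ a * b⁻¹ * c * d⁻¹ * e * f⁻¹ = 1)

/-- Auxiliary: the image of the upstairs intersection is contained downstairs. -/
lemma image_inter_subset_aux {G H : Type*} [Group G] [Group H]
    [DecidableEq G] [DecidableEq H] (φ : G →* H) (S : Finset G) {f₁ f₂ : H} {g₁ g₂ : G}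
    (hg₁ : φ g₁ = f₁) (hg₂ : φ g₂ = f₂) :
    (Pminus S g₂ ∩ Nplus S g₁).image φ ⊆ Pminus' φ S f₂ ∩ Nplus' φ S f₁ := by
  intro y hy
  simp only [Finset.mem_image, Finset.mem_inter, Pminus, Nplus, Pminus', Nplus',
    Finset.mem_product, Prod.exists] at hy ⊢
  obtain ⟨x, ⟨⟨a, b, ⟨⟨ha, hb⟩, hab⟩⟩, ⟨s, hs, hsx⟩⟩, hxy⟩ := hy
  refine ⟨⟨a, b, ⟨ha, hb⟩, ?_⟩, ⟨s, hs, ?_⟩⟩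
  · rw [← hg₂, ← hxy, ← hab]; simp [map_mul]
  · rw [← hg₁, ← hxy, ← hsx]; simp [map_mul]

lemma mem_nplus_inj_aux {G H : Type*} [Group G] [Group H]
    [DecidableEq G] [DecidableEq H] (φ : G →* H) (S : Finset G)
    (h2 : CondH2 φ S) (g₁ : G) :
    Set.InjOn φ ((Nplus S g₁ : Finset G) : Set G) := by
  intro x hx y hy hxy
  simp only [Finset.coe_image, Nplus, Finset.mem_coe, Finset.mem_image] at hx hy
  obtain ⟨s, hs, rfl⟩ := hx
  obtain ⟨t, ht, rfl⟩ := hy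
  have h1 : φ (s * t⁻¹) = 1 := by
    rw [map_mul, map_inv]
    have : φ g₁ * φ s = φ g₁ * φ t := by simpa [map_mul] using hxy
    rw [mul_left_cancel this]; group
  have := (h2 s hs t ht).mp h1
  have : s = t := by
    have h' := this
    rwa [mul_inv_eq_one] at h'
  rw [this]

theorem retrospective_forward_intersections_of_quotient {G H : Type*} [Group G] [Group H]
    [DecidableEq G] [DecidableEq H] (φ : G →* H) (S : Finset G)
    (hsurj : Function.Surjective φ) (h2 : CondH2 φ S) (h4 : CondH4 φ S) (h6 : CondH6 φ S)
    (f₁ f₂ : H) :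
    ∃ g₁ g₂ : G, φ g₁ = f₁ ∧ φ g₂ = f₂ ∧
      Pminus' φ S f₂ ∩ Nplus' φ S f₁ = (Pminus S g₂ ∩ Nplus S g₁).image φ ∧
      Set.InjOn φ ((Pminus S g₂ ∩ Nplus S g₁ : Finset G) : Set G) ∧
      (Pminus' φ S f₂ ∩ Nplus' φ S f₁).card = (Pminus S g₂ ∩ Nplus S g₁).card := by
  classical
  obtain ⟨g₁, hg₁⟩ := hsurj f₁
  by_cases hne : (Pminus' φ S f₂ ∩ Nplus' φ S f₁).Nonempty
  · -- nonempty case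
    obtain ⟨x, hx⟩ := hne
    rw [Finset.mem_inter] at hx
    obtain ⟨hxP, hxN⟩ := hx
    simp only [Pminus', Nplus', Finset.mem_image, Finset.mem_product, Prod.exists] at hxP hxN
    obtain ⟨a₀, b₀, ⟨ha₀, hb₀⟩, hx₂⟩ := hxP
    obtain ⟨s₀, hs₀, hx₁⟩ := hxN
    set g₂ : G := g₁ * s₀ * b₀⁻¹ * a₀ with hg₂def
    have hg₂ : φ g₂ = f₂ := by
      have key : f₂ * (φ a₀)⁻¹ * φ b₀ = f₁ * φ s₀ := hx₂.trans hx₁.symm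
      have : f₂ = f₁ * φ s₀ * (φ b₀)⁻¹ * φ a₀ := by
        rw [← key]; group
      rw [hg₂def]; simp only [map_mul, map_inv, hg₁]
      rw [this]
    have hinjN := mem_nplus_inj_aux φ S h2 g₁
    have hinj : Set.InjOn φ ((Pminus S g₂ ∩ Nplus S g₁ : Finset G) : Set G) := by
      apply hinjN.mono
      intro z hz
      simp only [Finset.coe_inter, Set.mem_inter_iff] at hz
      exact hz.2
    refine ⟨g₁, g₂, hg₁, hg₂, ?_, hinj, ?_⟩
    · apply Finset.Subset.antisymm
      · intro y hy
        rw [Finset.mem_inter] at hy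
        obtain ⟨hyP, hyN⟩ := hy
        simp only [Pminus', Nplus', Finset.mem_image, Finset.mem_product, Prod.exists]
          at hyP hyN
        obtain ⟨a, b, ⟨ha, hb⟩, hy₂⟩ := hyP
        obtain ⟨s, hs, hy₁⟩ := hyN
        -- key step: g₂ * a⁻¹ * b = g₁ * s, via (H6)
        have hphi : φ (g₂ * a⁻¹ * b) = φ (g₁ * s) := by
          simp only [map_mul, map_inv, hg₁, hg₂]
          rw [show f₂ * (φ a)⁻¹ * φ b = f₁ * φ s from hy₂.trans hy₁.symm]
        have hword : g₂ * a⁻¹ * b = g₁ * (s₀ * b₀⁻¹ * a₀ * a⁻¹ * b * s⁻¹) * s := by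
          rw [hg₂def]; group
        have hW : φ (s₀ * b₀⁻¹ * a₀ * a⁻¹ * b * s⁻¹) = 1 := by
          have h' : φ g₁ * φ (s₀ * b₀⁻¹ * a₀ * a⁻¹ * b * s⁻¹) * φ s = φ g₁ * φ s := by
            have := hphi
            rw [hword] at this
            simpa [map_mul] using this
          have h'' := mul_right_cancel h'
          exact (mul_eq_left).mp h''
        have hW1 : s₀ * b₀⁻¹ * a₀ * a⁻¹ * b * s⁻¹ = 1 :=
          (h6 s₀ hs₀ b₀ hb₀ a₀ ha₀ a ha b hb s hs).mp hW
        have heq : g₂ * a⁻¹ * b = g₁ * s := by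
          rw [hword, hW1]; group
        rw [Finset.mem_image]
        refine ⟨g₁ * s, ?_, ?_⟩
        · rw [Finset.mem_inter]
          constructor
          · simp only [Pminus, Finset.mem_image, Finset.mem_product, Prod.exists]
            exact ⟨a, b, ⟨ha, hb⟩, heq⟩
          · simp only [Nplus, Finset.mem_image]
            exact ⟨s, hs, rfl⟩
        · rw [map_mul, hg₁, hy₁]
      · exact image_inter_subset_aux φ S hg₁ hg₂
    · rw [show Pminus' φ S f₂ ∩ Nplus' φ S f₁ = (Pminus S g₂ ∩ Nplus S g₁).image φ from ?_]
      · exact Finset.card_image_of_injOn hinj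
      · apply Finset.Subset.antisymm
        · intro y hy
          rw [Finset.mem_inter] at hy
          obtain ⟨hyP, hyN⟩ := hy
          simp only [Pminus', Nplus', Finset.mem_image, Finset.mem_product, Prod.exists]
            at hyP hyN
          obtain ⟨a, b, ⟨ha, hb⟩, hy₂⟩ := hyP
          obtain ⟨s, hs, hy₁⟩ := hyN
          have hphi : φ (g₂ * a⁻¹ * b) = φ (g₁ * s) := by
            simp only [map_mul, map_inv, hg₁, hg₂]
            rw [show f₂ * (φ a)⁻¹ * φ b = f₁ * φ s from hy₂.trans hy₁.symm]
          have hword : g₂ * a⁻¹ * b = g₁ * (s₀ * b₀⁻¹ * a₀ * a⁻¹ * b * s⁻¹) * s := by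
            rw [hg₂def]; group
          have hW : φ (s₀ * b₀⁻¹ * a₀ * a⁻¹ * b * s⁻¹) = 1 := by
            have h' : φ g₁ * φ (s₀ * b₀⁻¹ * a₀ * a⁻¹ * b * s⁻¹) * φ s = φ g₁ * φ s := by
              have := hphi
              rw [hword] at this
              simpa [map_mul] using this
            have h'' := mul_right_cancel h'
            exact (mul_eq_left).mp h''
          have hW1 : s₀ * b₀⁻¹ * a₀ * a⁻¹ * b * s⁻¹ = 1 :=
            (h6 s₀ hs₀ b₀ hb₀ a₀ ha₀ a ha b hb s hs).mp hW
          have heq : g₂ * a⁻¹ * b = g₁ * s := by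
            rw [hword, hW1]; group
          rw [Finset.mem_image]
          refine ⟨g₁ * s, ?_, ?_⟩
          · rw [Finset.mem_inter]
            constructor
            · simp only [Pminus, Finset.mem_image, Finset.mem_product, Prod.exists]
              exact ⟨a, b, ⟨ha, hb⟩, heq⟩
            · simp only [Nplus, Finset.mem_image]
              exact ⟨s, hs, rfl⟩
          · rw [map_mul, hg₁, hy₁]
        · exact image_inter_subset_aux φ S hg₁ hg₂
  · -- empty case
    obtain ⟨g₂, hg₂⟩ := hsurj f₂
    rw [Finset.not_nonempty_iff_eq_empty] at hne
    have hup : Pminus S g₂ ∩ Nplus S g₁ = ∅ := by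
      rw [Finset.eq_empty_iff_forall_notMem]
      intro x hx
      have : φ x ∈ Pminus' φ S f₂ ∩ Nplus' φ S f₁ :=
        image_inter_subset_aux φ S hg₁ hg₂ (Finset.mem_image_of_mem φ hx)
      rw [hne] at this
      exact absurd this (Finset.notMem_empty _)
    refine ⟨g₁, g₂, hg₁, hg₂, ?_, ?_, ?_⟩
    · rw [hne, hup]; simp
    · rw [hup]; simp [Set.InjOn]
    · rw [hne, hup]; simp
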